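/- Let σ be a slice sequence for a string u ∈ Σ*. Then there exists a guided rewrite sequence ρ for u such that yield(ρ) = yield(σ). -/

import Mathlib

/-- A guided rewrite sequence for `u`: a list of guide-position pairs `(g, p)`
with `g ∈ G`, `p + |g| ≤ |u|` and `u[p+1, p+|g|] ∼ g`. -/
def IsRewriteSeq {α : Type} (sim : α → α → Prop) (G : Set (List α)) (u : List α)
    (ρ : List (List α × ℕ)) : Prop :=
  ∀ gp ∈ ρ, gp.1 ∈ G ∧ gp.2 + gp.1.length ≤ u.length ∧
    List.Forall₂ sim ((u.drop gp.2).take gp.1.length) gp.1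

/-- Apply a single guided rewrite `(g, p)` to `u`, replacing `u[p+1, p+|g|]` by `g`. -/
def applyRW {α : Type} (u : List α) (gp : List α × ℕ) : List α :=
  u.take gp.2 ++ gp.1 ++ u.drop (gp.2 + gp.1.length)

/-- The yield of a guided rewrite sequence: the final string `u_r`. -/
def rwYield {α : Type} (u : List α) (ρ : List (List α × ℕ)) : List α :=
  ρ.foldl applyRW u

/-- A slice for a symbol `a`: a finite sequence of guide-offset pairs `(g, q)`
with `g ∈ G`, `1 ≤ q ≤ |g|` and `a ∼ g[q]` (offsets are 1-based). -/
def IsSlice {α : Type} (sim : α → α → Prop) (G : Set (List α))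
    (sl : List (List α × ℕ)) (a : α) : Prop :=
  ∀ gq ∈ sl, gq.1 ∈ G ∧ 1 ≤ gq.2 ∧ gq.2 ≤ gq.1.length ∧
    ∃ b, gq.1[gq.2 - 1]? = some b ∧ sim a b

/-- The yield of a slice for the symbol `a`: the symbol `g[q]` of its last
guide-offset pair, or `a` itself if the slice is empty. -/
def sliceYield {α : Type} (a : α) (sl : List (List α × ℕ)) : α :=
  match sl.getLast? with
  | some gq => (gq.1[gq.2 - 1]?).getD a
  | none => a

/-- A start slice: all offsets equal `1`. -/
def IsStartSlice {α : Type} (sl : List (List α × ℕ)) : Prop :=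
  ∀ gq ∈ sl, gq.2 = 1

/-- An end slice: each offset equals the length of its guide. -/
def IsEndSlice {α : Type} (sl : List (List α × ℕ)) : Prop :=
  ∀ gq ∈ sl, gq.2 = gq.1.length

/-- `γ` is the cut for slices `sl` and `sl'`: a monotone partial injection from
the index set of `sl` to that of `sl'` with `γ(i) = j` iff `g_i = g'_j` and
`q_i + 1 = q'_j`; indexes outside the domain carry the last offset of their
guide, indexes outside the range carry offset `1`. -/
def IsCut {α : Type} (sl sl' : List (List α × ℕ)) (γ : ℕ → Option ℕ) : Prop :=
  (∀ i j, γ i = some j → i < sl.length ∧ j < sl'.length) ∧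
  (∀ i i' j j', γ i = some j → γ i' = some j' → i < i' → j < j') ∧
  (∀ (i : ℕ) (hi : i < sl.length) (j : ℕ) (hj : j < sl'.length),
      γ i = some j ↔
        (sl.get ⟨i, hi⟩).1 = (sl'.get ⟨j, hj⟩).1 ∧
        (sl.get ⟨i, hi⟩).2 + 1 = (sl'.get ⟨j, hj⟩).2) ∧
  (∀ (i : ℕ) (hi : i < sl.length), γ i = none →
      (sl.get ⟨i, hi⟩).2 = (sl.get ⟨i, hi⟩).1.length) ∧
  (∀ (j : ℕ) (hj : j < sl'.length), (∀ i, γ i ≠ some j) →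
      (sl'.get ⟨j, hj⟩).2 = 1)

/-- A slice sequence for `u`: one slice per position of `u`, the first being a
start slice, the last an end slice, and any two neighbouring slices being
related by a cut. -/
def IsSliceSeq {α : Type} (sim : α → α → Prop) (G : Set (List α)) (u : List α)
    (σ : List (List (List α × ℕ))) : Prop :=
  σ.length = u.length ∧
  (∀ (n : ℕ) (sl : List (List α × ℕ)) (a : α),
      σ[n]? = some sl → u[n]? = some a → IsSlice sim G sl a) ∧
  (∀ (n : ℕ) (sl sl' : List (List α × ℕ)),
      σ[n]? = some sl → σ[n + 1]? = some sl' → ∃ γ, IsCut sl sl' γ) ∧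
  (∀ sl, σ[0]? = some sl → IsStartSlice sl) ∧
  (∀ sl, σ[σ.length - 1]? = some sl → IsEndSlice sl)

/-- The yield of a slice sequence for `u`: the concatenation of the yields of
its slices (position `n` uses `u[n]` as default symbol). -/
def seqYield {α : Type} (u : List α) (σ : List (List (List α × ℕ))) : List α :=
  (u.zip σ).map (fun p => sliceYield p.1 p.2)

namespace SliceAux
variable {α : Type}


/-- least index `j ≥ t` with `j < bound` and `inh j` defined, else `bound`-ish. -/
noncomputable def hiIdx (inh : ℕ → Option ℕ) (bound t : ℕ) : ℕ :=
  Nat.find (⟨bound, Or.inr le_rfl⟩ : ∃ j, (t ≤ j ∧ (inh j).isSome) ∨ bound ≤ j)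

lemma hiIdx_spec (inh : ℕ → Option ℕ) (bound t : ℕ) (h : hiIdx inh bound t < bound) :
    t ≤ hiIdx inh bound t ∧ (inh (hiIdx inh bound t)).isSome := by
  have := Nat.find_spec (⟨bound, Or.inr le_rfl⟩ : ∃ j, (t ≤ j ∧ (inh j).isSome) ∨ bound ≤ j)
  rcases this with h1 | h2
  · exact h1
  · unfold hiIdx at h; omega

lemma hiIdx_min (inh : ℕ → Option ℕ) (bound t j : ℕ) (ht : t ≤ j) (hj : j < bound)
    (hs : (inh j).isSome) : hiIdx inh bound t ≤ j ∧ hiIdx inh bound t < bound := by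
  have : hiIdx inh bound t ≤ j := Nat.find_min' _ (Or.inl ⟨ht, hs⟩)
  exact ⟨this, lt_of_le_of_lt this hj⟩

noncomputable def interp (w : ℕ → ℚ) (inh : ℕ → Option ℕ) (bound : ℕ) : ℕ → ℚ
  | 0 =>
    match inh 0 with
    | some i => w i
    | none =>
      if _ : hiIdx inh bound 1 < bound then w ((inh (hiIdx inh bound 1)).iget) - 1 else 0
  | (j+1) =>
    match inh (j+1) with
    | some i => w i
    | none =>
      if _ : hiIdx inh bound (j+2) < bound
      then (interp w inh bound j + w ((inh (hiIdx inh bound (j+2))).iget)) / 2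
      else interp w inh bound j + 1

lemma interp_of_inh (w : ℕ → ℚ) (inh : ℕ → Option ℕ) (bound : ℕ) {j i : ℕ}
    (h : inh j = some i) : interp w inh bound j = w i := by
  cases j <;> simp [interp, h]

section
variable (w : ℕ → ℚ) (inh : ℕ → Option ℕ) (bound : ℕ)
variable (H : ∀ j j' i i', j < j' → j' < bound → inh j = some i → inh j' = some i' →
  w i < w i')

include H in
lemma interp_lt_upper : ∀ j j'' i'', j < j'' → j'' < bound → inh j'' = some i'' →
    interp w inh bound j < w i'' := by
  intro j
  induction j using Nat.strong_induction_on with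
  | _ j IH =>
    intro j'' i'' hjj hb hinh
    rcases hj : inh j with _ | i
    case some =>
      rw [interp_of_inh w inh bound hj]
      exact H j j'' i i'' hjj hb hj hinh
    case none =>
    match j, hj with
    | 0, hj =>
      have hmin := hiIdx_min inh bound 1 j'' (by omega) hb (by simp [hinh])
      obtain ⟨hle, hlt⟩ := hmin
      obtain ⟨ht, hs⟩ := hiIdx_spec inh bound 1 hlt
      obtain ⟨i0, hi0⟩ := Option.isSome_iff_exists.mp hs
      have hval : w ((inh (hiIdx inh bound 1)).iget) = w i0 := by rw [hi0]
      have hup : w i0 ≤ w i'' := by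
        rcases lt_or_eq_of_le hle with h' | h'
        · exact le_of_lt (H _ _ _ _ h' hb hi0 hinh)
        · rw [h'] at hi0; rw [hi0] at hinh; simp at hinh; rw [hinh]
      simp only [interp, hj]
      rw [dif_pos hlt, hval]
      linarith
    | (k+1), hj =>
      have hmin := hiIdx_min inh bound (k+2) j'' (by omega) hb (by simp [hinh])
      obtain ⟨hle, hlt⟩ := hmin
      obtain ⟨ht, hs⟩ := hiIdx_spec inh bound (k+2) hlt
      obtain ⟨i0, hi0⟩ := Option.isSome_iff_exists.mp hs
      have hval : w ((inh (hiIdx inh bound (k+2))).iget) = w i0 := by rw [hi0]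
      have hup : w i0 ≤ w i'' := by
        rcases lt_or_eq_of_le hle with h' | h'
        · exact le_of_lt (H _ _ _ _ h' hb hi0 hinh)
        · rw [h'] at hi0; rw [hi0] at hinh; simp at hinh; rw [hinh]
      have hIH : interp w inh bound k < w i0 :=
        IH k (by omega) _ _ (by omega) hlt hi0
      simp only [interp, hj]
      rw [dif_pos hlt, hval]
      linarith

include H in
lemma interp_succ_lt (j : ℕ) (hb : j + 1 < bound) :
    interp w inh bound j < interp w inh bound (j+1) := by
  match hj : inh (j+1) with
  | some i =>
    rw [interp_of_inh w inh bound hj]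
    exact interp_lt_upper w inh bound H j (j+1) i (by omega) hb hj
  | none =>
    by_cases hlt : hiIdx inh bound (j+2) < bound
    · simp only [interp, hj]
      rw [dif_pos hlt]
      obtain ⟨ht, hs⟩ := hiIdx_spec inh bound (j+2) hlt
      obtain ⟨i0, hi0⟩ := Option.isSome_iff_exists.mp hs
      have hval : w ((inh (hiIdx inh bound (j+2))).iget) = w i0 := by rw [hi0]
      have := interp_lt_upper w inh bound H j _ _ (by omega) hlt hi0
      rw [hval]; linarith
    · simp only [interp, hj]
      rw [dif_neg hlt]; linarith

include H in
lemma interp_strictMono : ∀ i j, i < j → j < bound →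
    interp w inh bound i < interp w inh bound j := by
  intro i j
  induction j with
  | zero => omega
  | succ k IH =>
    intro hij hb
    have hk : interp w inh bound k < interp w inh bound (k+1) :=
      interp_succ_lt w inh bound H k hb
    rcases Nat.lt_or_ge i k with h | h
    · exact lt_trans (IH h (by omega)) hk
    · have : i = k := by omega
      rw [this]; exact hk

end

variable {α : Type}

lemma applyRW_length (w : List α) (t : List α × ℕ) (h : t.2 + t.1.length ≤ w.length) :
    (applyRW w t).length = w.length := by
  simp [applyRW]; omega

lemma applyRW_getElem (w : List α) (t : List α × ℕ) (x : ℕ)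
    (hb : t.2 + t.1.length ≤ w.length) (hx : x < w.length) :
    (applyRW w t)[x]'(by rw [applyRW_length w t hb]; exact hx) =
      if h : t.2 ≤ x ∧ x < t.2 + t.1.length then t.1[x - t.2]'(by omega) else w[x] := by
  have htake : (w.take t.2).length = t.2 := by simp; omega
  rcases Nat.lt_or_ge x t.2 with h1 | h1
  · rw [dif_neg (by omega)]
    unfold applyRW
    rw [List.getElem_append_left (by simp [htake]; omega),
        List.getElem_append_left (by rw [htake]; exact h1)]
    exact List.getElem_take
  · rcases Nat.lt_or_ge x (t.2 + t.1.length) with h2 | h2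
    · rw [dif_pos ⟨h1, h2⟩]
      unfold applyRW
      rw [List.getElem_append_left (by simp [htake]; omega),
          List.getElem_append_right (by rw [htake]; exact h1)]
      congr 1
      rw [htake]
    · rw [dif_neg (by omega)]
      unfold applyRW
      rw [List.getElem_append_right (by simp [htake]; omega)]
      rw [List.getElem_drop]
      congr 1
      simp [htake]
      omega

lemma rwYield_length : ∀ (l : List (List α × ℕ)) (w : List α),
    (∀ t ∈ l, t.2 + t.1.length ≤ w.length) → (rwYield w l).length = w.length := by
  intro l
  induction l with
  | nil => intro w _; rfl
  | cons t l IH =>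
    intro w hb
    have h1 : t.2 + t.1.length ≤ w.length := hb t (by simp)
    have h2 := applyRW_length w t h1
    have : rwYield w (t :: l) = rwYield (applyRW w t) l := rfl
    rw [this, IH _ (by intro t' ht'; rw [h2]; exact hb t' (by simp [ht']))]
    exact h2

lemma rwYield_no_writer : ∀ (l : List (List α × ℕ)) (w : List α) (x : ℕ)
    (hx : x < w.length) (hb : ∀ t ∈ l, t.2 + t.1.length ≤ w.length)
    (hnw : ∀ t ∈ l, ¬(t.2 ≤ x ∧ x < t.2 + t.1.length)),
    (rwYield w l)[x]'(by rw [rwYield_length l w hb]; exact hx) = w[x] := by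
  intro l
  induction l with
  | nil => intro w x hx _ _; rfl
  | cons t l IH =>
    intro w x hx hb hnw
    have h1 : t.2 + t.1.length ≤ w.length := hb t (by simp)
    have h2 := applyRW_length w t h1
    have heq : rwYield w (t :: l) = rwYield (applyRW w t) l := rfl
    have hb' : ∀ t' ∈ l, t'.2 + t'.1.length ≤ (applyRW w t).length := by
      intro t' ht'; rw [h2]; exact hb t' (by simp [ht'])
    have := IH (applyRW w t) x (by rw [h2]; exact hx) hb'
      (by intro t' ht'; exact hnw t' (by simp [ht']))
    have hstep : (applyRW w t)[x]'(by rw [h2]; exact hx) = w[x] := by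
      rw [applyRW_getElem w t x h1 hx, dif_neg (hnw t (by simp))]
    simp only [heq]
    rw [← hstep]
    convert this using 2

lemma rwYield_last_writer (l₁ l₂ : List (List α × ℕ)) (t : List α × ℕ) (w : List α) (x : ℕ)
    (hx : x < w.length)
    (hb : ∀ t' ∈ l₁ ++ t :: l₂, t'.2 + t'.1.length ≤ w.length)
    (hw : t.2 ≤ x ∧ x < t.2 + t.1.length)
    (hnw : ∀ t' ∈ l₂, ¬(t'.2 ≤ x ∧ x < t'.2 + t'.1.length)) :
    (rwYield w (l₁ ++ t :: l₂))[x]'(by rw [rwYield_length _ w hb]; exact hx) =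
      t.1[x - t.2]'(by omega) := by
  have hb1 : ∀ t' ∈ l₁, t'.2 + t'.1.length ≤ w.length := by
    intro t' ht'; exact hb t' (by simp [ht'])
  have hl1 : (rwYield w l₁).length = w.length := rwYield_length l₁ w hb1
  have hbt : t.2 + t.1.length ≤ (rwYield w l₁).length := by
    rw [hl1]; exact hb t (by simp)
  have h2 := applyRW_length (rwYield w l₁) t hbt
  have heq : rwYield w (l₁ ++ t :: l₂) = rwYield (applyRW (rwYield w l₁) t) l₂ := by
    simp [rwYield, List.foldl_append]
  have hb2 : ∀ t' ∈ l₂, t'.2 + t'.1.length ≤ (applyRW (rwYield w l₁) t).length := by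
    intro t' ht'; rw [h2, hl1]; exact hb t' (by simp [ht'])
  have hfin := rwYield_no_writer l₂ (applyRW (rwYield w l₁) t) x
    (by rw [h2, hl1]; exact hx) hb2 hnw
  have hstep : (applyRW (rwYield w l₁) t)[x]'(by rw [h2, hl1]; exact hx) =
      t.1[x - t.2]'(by omega) := by
    rw [applyRW_getElem _ t x hbt (by rw [hl1]; exact hx), dif_pos hw]
  simp only [heq]
  rw [← hstep]
  convert hfin using 2

lemma exists_last_sat {β : Type*} (Q : β → Prop) :
    ∀ l : List β, (∃ b ∈ l, Q b) →
      ∃ l₁ b l₂, l = l₁ ++ b :: l₂ ∧ Q b ∧ ∀ b' ∈ l₂, ¬ Q b' := by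
  intro l
  induction l using List.reverseRecOn with
  | nil => simp
  | append_singleton l a IH =>
    intro h
    by_cases ha : Q a
    · exact ⟨l, a, [], rfl, ha, by simp⟩
    · have hl : ∃ b ∈ l, Q b := by
        rcases h with ⟨b, hb, hQ⟩
        simp at hb
        rcases hb with hb | hb
        · exact ⟨b, hb, hQ⟩
        · subst hb; exact absurd hQ ha
      obtain ⟨l₁, b, l₂, hdec, hQ, hno⟩ := IH hl
      refine ⟨l₁, b, l₂ ++ [a], by simp [hdec], hQ, ?_⟩
      intro b' hb'
      simp at hb'
      rcases hb' with hb' | hb'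
      · exact hno b' hb'
      · subst hb'; exact ha


open Classical in
/-- the `n`-th slice of `σ` (or `[]`). -/
def slnn (σ : List (List (List α × ℕ))) (n : ℕ) : List (List α × ℕ) := (σ[n]?).getD []

/-- entry `i` of slice `n` is connected to entry `j` of slice `n+1`. -/
def Cond (σ : List (List (List α × ℕ))) (n i j : ℕ) : Prop :=
  ∃ e e' : List α × ℕ, (slnn σ n)[i]? = some e ∧ (slnn σ (n+1))[j]? = some e' ∧
    e.1 = e'.1 ∧ e.2 + 1 = e'.2

open Classical in
noncomputable def inhf (σ : List (List (List α × ℕ))) (n j : ℕ) : Option ℕ :=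
  if h : ∃ i, Cond σ n i j then some h.choose else none

noncomputable def vfun (σ : List (List (List α × ℕ))) : ℕ → ℕ → ℚ
  | 0 => fun i => (i : ℚ)
  | n+1 => interp (vfun σ n) (inhf σ n) (slnn σ (n+1)).length

lemma lt_of_slnn_getElem? {σ : List (List (List α × ℕ))} {n i : ℕ} {e : List α × ℕ}
    (h : (slnn σ n)[i]? = some e) : n < σ.length := by
  by_contra hn
  have : σ[n]? = none := List.getElem?_eq_none (by omega)
  simp [slnn, this] at h

lemma slnn_get {σ : List (List (List α × ℕ))} {n : ℕ} (h : n < σ.length) :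
    σ[n]? = some (slnn σ n) := by
  simp [slnn, List.getElem?_eq_getElem h]

lemma inhf_some {σ : List (List (List α × ℕ))} {n j i : ℕ} (h : inhf σ n j = some i) :
    Cond σ n i j := by
  unfold inhf at h
  split at h
  · rename_i hex
    injection h with h'
    rw [← h']
    exact hex.choose_spec
  · exact absurd h (by simp)

section WithCut
variable {sim : α → α → Prop} {G : Set (List α)} {σ : List (List (List α × ℕ))}
variable (hcut : ∀ (n : ℕ) sl sl', σ[n]? = some sl → σ[n+1]? = some sl' →
  ∃ γ, IsCut sl sl' γ)

include hcut in
lemma cond_gamma {n i j : ℕ} (hc : Cond σ n i j) :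
    ∃ γ, IsCut (slnn σ n) (slnn σ (n+1)) γ ∧ γ i = some j := by
  obtain ⟨e, e', he, he', hg, hq⟩ := hc
  have hn : n < σ.length := lt_of_slnn_getElem? he
  have hn' : n + 1 < σ.length := lt_of_slnn_getElem? he'
  obtain ⟨γ, hγ⟩ := hcut n _ _ (slnn_get hn) (slnn_get hn')
  refine ⟨γ, hγ, ?_⟩
  have hi : i < (slnn σ n).length := (List.getElem?_eq_some_iff.mp he).1
  have hj : j < (slnn σ (n+1)).length := (List.getElem?_eq_some_iff.mp he').1
  have hei : (slnn σ n).get ⟨i, hi⟩ = e := by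
    have := List.getElem?_eq_some_iff.mp he
    simpa [List.get_eq_getElem] using this.2
  have hej : (slnn σ (n+1)).get ⟨j, hj⟩ = e' := by
    have := List.getElem?_eq_some_iff.mp he'
    simpa [List.get_eq_getElem] using this.2
  exact (hγ.2.2.1 i hi j hj).mpr (by rw [hei, hej]; exact ⟨hg, hq⟩)

include hcut in
lemma cond_unique {n i i' j : ℕ} (hc : Cond σ n i j) (hc' : Cond σ n i' j) : i = i' := by
  obtain ⟨γ, hγ, hij⟩ := cond_gamma hcut hc
  obtain ⟨e, e', he, he', hg, hq⟩ := hc'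
  have hi' : i' < (slnn σ n).length := (List.getElem?_eq_some_iff.mp he).1
  have hj : j < (slnn σ (n+1)).length := (List.getElem?_eq_some_iff.mp he').1
  have hij' : γ i' = some j := by
    apply (hγ.2.2.1 i' hi' j hj).mpr
    have h1 := (List.getElem?_eq_some_iff.mp he).2
    have h2 := (List.getElem?_eq_some_iff.mp he').2
    constructor
    · simp only [List.get_eq_getElem]; rw [h1, h2]; exact hg
    · simp only [List.get_eq_getElem]; rw [h1, h2]; exact hq
  by_contra hne
  rcases Nat.lt_or_ge i i' with h | h
  · exact absurd (hγ.2.1 i i' j j hij hij' h) (by omega)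
  · have : i' < i := by omega
    exact absurd (hγ.2.1 i' i j j hij' hij this) (by omega)

include hcut in
lemma vfun_compat {n i j : ℕ} (hc : Cond σ n i j) : vfun σ n i = vfun σ (n+1) j := by
  have hex : ∃ i, Cond σ n i j := ⟨i, hc⟩
  have hinh : inhf σ n j = some i := by
    unfold inhf
    rw [dif_pos hex]
    congr 1
    exact cond_unique hcut hex.choose_spec hc
  have : vfun σ (n+1) j = interp (vfun σ n) (inhf σ n) (slnn σ (n+1)).length j := rfl
  rw [this, interp_of_inh _ _ _ hinh]

include hcut in
lemma vfun_mono : ∀ n i j, i < j → j < (slnn σ n).length → vfun σ n i < vfun σ n j := by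
  intro n
  induction n with
  | zero =>
    intro i j hij _
    have h0 : ∀ k : ℕ, vfun σ 0 k = (k : ℚ) := fun k => rfl
    rw [h0, h0]
    exact_mod_cast hij
  | succ m IH =>
    intro i j hij hj
    have hv : vfun σ (m+1) = interp (vfun σ m) (inhf σ m) (slnn σ (m+1)).length := rfl
    rw [hv]
    apply interp_strictMono _ _ _ _ i j hij hj
    intro a b ia ib hab hb hia hib
    have hca := inhf_some hia
    have hcb := inhf_some hib
    obtain ⟨γ, hγ, hga⟩ := cond_gamma hcut hca
    obtain ⟨γ', hγ', hgb⟩ := cond_gamma hcut hcb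
    -- γ and γ' both cuts between same slices; use γ of a's cut for b too
    have hgb' : γ ib = some b := by
      obtain ⟨e, e', he, he', hg, hq⟩ := hcb
      have hi' : ib < (slnn σ m).length := (List.getElem?_eq_some_iff.mp he).1
      have hjb : b < (slnn σ (m+1)).length := (List.getElem?_eq_some_iff.mp he').1
      apply (hγ.2.2.1 ib hi' b hjb).mpr
      have h1 := (List.getElem?_eq_some_iff.mp he).2
      have h2 := (List.getElem?_eq_some_iff.mp he').2
      constructor
      · simp only [List.get_eq_getElem]; rw [h1, h2]; exact hg
      · simp only [List.get_eq_getElem]; rw [h1, h2]; exact hq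
    have hiab : ia < ib := by
      by_contra hle
      rcases Nat.lt_or_ge ib ia with h | h
      · exact absurd (hγ.2.1 ib ia b a hgb' hga h) (by omega)
      · have : ia = ib := by omega
        rw [this] at hga
        rw [hga] at hgb'
        injection hgb' with h'
        omega
    have hib_lt : ib < (slnn σ m).length := (hγ.1 ib b hgb').1
    exact IH ia ib hiab hib_lt

end WithCut

section WithAll
variable {σ : List (List (List α × ℕ))}
variable (hcut : ∀ (n : ℕ) sl sl', σ[n]? = some sl → σ[n+1]? = some sl' →
  ∃ γ, IsCut sl sl' γ)
variable (hstart : ∀ sl, σ[0]? = some sl → IsStartSlice sl)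
variable (hend : ∀ sl, σ[σ.length - 1]? = some sl → IsEndSlice sl)

include hcut hstart in
lemma step_back {n i : ℕ} {e : List α × ℕ} (he : (slnn σ n)[i]? = some e) (hq : 2 ≤ e.2) :
    1 ≤ n ∧ ∃ i' e', (slnn σ (n-1))[i']? = some e' ∧ e'.1 = e.1 ∧ e'.2 + 1 = e.2 ∧
      vfun σ (n-1) i' = vfun σ n i := by
  have hn : n < σ.length := lt_of_slnn_getElem? he
  have hn1 : 1 ≤ n := by
    by_contra h0
    have hn0 : n = 0 := by omega
    subst hn0
    have := hstart (slnn σ 0) (slnn_get hn) e (List.mem_of_getElem? he)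
    omega
  refine ⟨hn1, ?_⟩
  obtain ⟨m, rfl⟩ : ∃ m, n = m + 1 := ⟨n - 1, by omega⟩
  obtain ⟨γ, hγ⟩ := hcut m _ _ (slnn_get (by omega)) (slnn_get hn)
  have hi : i < (slnn σ (m+1)).length := (List.getElem?_eq_some_iff.mp he).1
  have hie : (slnn σ (m+1)).get ⟨i, hi⟩ = e := (List.getElem?_eq_some_iff.mp he).2
  have hex : ∃ i'', γ i'' = some i := by
    by_contra hno
    push_neg at hno
    have := hγ.2.2.2.2 i hi hno
    rw [hie] at this
    omega
  obtain ⟨i'', hγi⟩ := hex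
  have hi'' : i'' < (slnn σ m).length := (hγ.1 i'' i hγi).1
  have hiff := (hγ.2.2.1 i'' hi'' i hi).mp hγi
  set e' := (slnn σ m).get ⟨i'', hi''⟩ with he'def
  have he'some : (slnn σ m)[i'']? = some e' := by
    rw [List.getElem?_eq_some_iff]
    exact ⟨hi'', rfl⟩
  have hcond : Cond σ m i'' i := ⟨e', e, he'some, he, by rw [← hie]; exact hiff.1,
    by rw [← hie]; exact hiff.2⟩
  refine ⟨i'', e', by simpa using he'some, by rw [← hie]; exact hiff.1,
    by rw [← hie]; exact hiff.2, ?_⟩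
  have := vfun_compat hcut hcond
  simpa using this

include hcut hend in
lemma step_fwd {n i : ℕ} {e : List α × ℕ} (he : (slnn σ n)[i]? = some e)
    (hq : e.2 < e.1.length) :
    n + 1 < σ.length ∧ ∃ j e', (slnn σ (n+1))[j]? = some e' ∧ e'.1 = e.1 ∧
      e'.2 = e.2 + 1 ∧ vfun σ (n+1) j = vfun σ n i := by
  have hn : n < σ.length := lt_of_slnn_getElem? he
  have hn1 : n + 1 < σ.length := by
    by_contra h0
    have hn0 : n = σ.length - 1 := by omega
    have := hend (slnn σ n) (by rw [← hn0]; exact slnn_get hn) e (List.mem_of_getElem? he)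
    omega
  refine ⟨hn1, ?_⟩
  obtain ⟨γ, hγ⟩ := hcut n _ _ (slnn_get hn) (slnn_get hn1)
  have hi : i < (slnn σ n).length := (List.getElem?_eq_some_iff.mp he).1
  have hie : (slnn σ n).get ⟨i, hi⟩ = e := (List.getElem?_eq_some_iff.mp he).2
  have hsome : γ i ≠ none := by
    intro hno
    have := hγ.2.2.2.1 i hi hno
    rw [hie] at this
    omega
  obtain ⟨j, hγj⟩ := Option.ne_none_iff_exists'.mp hsome
  have hj : j < (slnn σ (n+1)).length := (hγ.1 i j hγj).2
  have hiff := (hγ.2.2.1 i hi j hj).mp hγj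
  set e' := (slnn σ (n+1)).get ⟨j, hj⟩ with he'def
  have he'some : (slnn σ (n+1))[j]? = some e' := by
    rw [List.getElem?_eq_some_iff]
    exact ⟨hj, rfl⟩
  have hcond : Cond σ n i j := ⟨e, e', he, he'some, by rw [← hie]; exact hiff.1,
    by rw [← hie]; exact hiff.2⟩
  rw [hie] at hiff
  exact ⟨j, e', he'some, hiff.1.symm, by omega, (vfun_compat hcut hcond).symm⟩

include hcut hstart hend in
lemma thread {n : ℕ} {e : List α × ℕ}
    (he : (slnn σ n).getLast? = some e) (hq1 : 1 ≤ e.2) (hq2 : e.2 ≤ e.1.length) :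
    e.2 - 1 ≤ n ∧ n + 1 - e.2 + e.1.length ≤ σ.length ∧
    ∀ k < e.1.length, ∃ i' e', (slnn σ (n + 1 - e.2 + k))[i']? = some e' ∧
      e'.1 = e.1 ∧ e'.2 = k + 1 ∧
      vfun σ (n + 1 - e.2 + k) i' = vfun σ n ((slnn σ n).length - 1) := by
  have hbase : (slnn σ n)[(slnn σ n).length - 1]? = some e := by
    rw [← List.getLast?_eq_getElem?]; exact he
  have back : ∀ d, d ≤ e.2 - 1 → d ≤ n ∧ ∃ i' e',
      (slnn σ (n-d))[i']? = some e' ∧ e'.1 = e.1 ∧ e'.2 = e.2 - d ∧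
      vfun σ (n-d) i' = vfun σ n ((slnn σ n).length - 1) := by
    intro d
    induction d with
    | zero =>
      intro _
      exact ⟨Nat.zero_le n, (slnn σ n).length - 1, e, hbase, rfl, by omega, rfl⟩
    | succ d IH =>
      intro hd
      obtain ⟨hdn, i', e', he', hg', hq', hv'⟩ := IH (by omega)
      have h2 : 2 ≤ e'.2 := by omega
      obtain ⟨h1n, i'', e'', he'', hg'', hq'', hv''⟩ := step_back hcut hstart he' h2
      have hpos : n - d - 1 = n - (d+1) := by omega
      rw [hpos] at he'' hv''
      exact ⟨by omega, i'', e'', he'', by rw [hg'']; exact hg', by omega,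
        by rw [hv'']; exact hv'⟩
  have fwd : ∀ d, e.2 + d ≤ e.1.length → (n + d < σ.length) ∧ ∃ j e',
      (slnn σ (n+d))[j]? = some e' ∧ e'.1 = e.1 ∧ e'.2 = e.2 + d ∧
      vfun σ (n+d) j = vfun σ n ((slnn σ n).length - 1) := by
    intro d
    induction d with
    | zero =>
      intro _
      exact ⟨lt_of_slnn_getElem? hbase, (slnn σ n).length - 1, e, hbase, rfl, by omega, rfl⟩
    | succ d IH =>
      intro hd
      obtain ⟨hdn, j, e', he', hg', hq', hv'⟩ := IH (by omega)
      have h2 : e'.2 < e'.1.length := by rw [hg']; omega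
      obtain ⟨h1n, j', e'', he'', hg'', hq'', hv''⟩ := step_fwd hcut hend he' h2
      have hpos : n + d + 1 = n + (d+1) := by omega
      rw [hpos] at he'' hv'' h1n
      exact ⟨h1n, j', e'', he'', by rw [hg'']; exact hg', by omega,
        by rw [hv'']; exact hv'⟩
  have c1 : e.2 - 1 ≤ n := (back (e.2 - 1) le_rfl).1
  have c2 : n + 1 - e.2 + e.1.length ≤ σ.length := by
    have := (fwd (e.1.length - e.2) (by omega)).1
    omega
  refine ⟨c1, c2, ?_⟩
  intro k hk
  by_cases hle : k + 1 ≤ e.2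
  · obtain ⟨_, i', e', he', hg', hq', hv'⟩ := back (e.2 - (k+1)) (by omega)
    have hpos : n - (e.2 - (k+1)) = n + 1 - e.2 + k := by omega
    rw [hpos] at he' hv'
    exact ⟨i', e', he', hg', by omega, hv'⟩
  · obtain ⟨_, j, e', he', hg', hq', hv'⟩ := (fwd (k+1-e.2) (by omega))
    have hpos : n + (k+1-e.2) = n + 1 - e.2 + k := by omega
    rw [hpos] at he' hv'
    exact ⟨j, e', he', hg', by omega, hv'⟩

end WithAll

noncomputable def rankF (σ : List (List (List α × ℕ))) (n : ℕ) : ℚ :=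
  vfun σ n ((slnn σ n).length - 1)

def topEF (σ : List (List (List α × ℕ))) (n : ℕ) : List α × ℕ :=
  ((slnn σ n).getLast?).getD ([], 0)

def rwOfF (σ : List (List (List α × ℕ))) (n : ℕ) : List α × ℕ :=
  ((topEF σ n).1, n + 1 - (topEF σ n).2)

def PF (σ : List (List (List α × ℕ))) : List ℕ :=
  (List.range σ.length).filter (fun n => !(slnn σ n).isEmpty)

noncomputable def SF (σ : List (List (List α × ℕ))) : List ℕ :=
  @List.insertionSort ℕ (fun a b => rankF σ a ≤ rankF σ b) (Classical.decRel _) (PF σ)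

lemma PF_mem {σ : List (List (List α × ℕ))} {n : ℕ} :
    n ∈ PF σ ↔ n < σ.length ∧ slnn σ n ≠ [] := by
  simp [PF, List.mem_filter, List.mem_range, List.isEmpty_iff]

lemma SF_mem {σ : List (List (List α × ℕ))} {n : ℕ} : n ∈ SF σ ↔ n ∈ PF σ :=
  (@List.perm_insertionSort ℕ (fun a b => rankF σ a ≤ rankF σ b) (Classical.decRel _)
    (PF σ)).mem_iff

lemma SF_sorted (σ : List (List (List α × ℕ))) :
    List.Pairwise (fun a b => rankF σ a ≤ rankF σ b) (SF σ) := by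
  haveI : Std.Total (fun a b : ℕ => rankF σ a ≤ rankF σ b) := ⟨fun a b => le_total _ _⟩
  haveI : IsTrans ℕ (fun a b => rankF σ a ≤ rankF σ b) := ⟨fun a b c => le_trans⟩
  exact @List.pairwise_insertionSort ℕ _ (Classical.decRel _) _ _ (PF σ)

lemma topEF_last {σ : List (List (List α × ℕ))} {n : ℕ} (h : slnn σ n ≠ []) :
    (slnn σ n).getLast? = some (topEF σ n) := by
  cases hl : (slnn σ n).getLast? with
  | none => exact absurd (List.getLast?_eq_none_iff.mp hl) h
  | some e => simp [topEF, hl]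

end SliceAux

open SliceAux

/-- For every slice sequence `σ` for a string `u` there exists
a guided rewrite sequence `ρ` for `u` with `yield(ρ) = yield(σ)`. -/
theorem sliceSeq_to_rewriteSeq
    {α : Type} [Fintype α] (sim : α → α → Prop) (hsim : Equivalence sim)
    (G : Set (List α)) (hG : G.Finite) (u : List α)
    (σ : List (List (List α × ℕ))) (hσ : IsSliceSeq sim G u σ) :
    ∃ ρ : List (List α × ℕ),
      IsRewriteSeq sim G u ρ ∧ rwYield u ρ = seqYield u σ := by
  classical
  obtain ⟨hlen, hslice, hcut, hstart, hend⟩ := hσ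
  have hkey : ∀ n (hn : n < σ.length), slnn σ n ≠ [] →
      (topEF σ n).1 ∈ G ∧ 1 ≤ (topEF σ n).2 ∧ (topEF σ n).2 ≤ (topEF σ n).1.length ∧
      (∃ b, (topEF σ n).1[(topEF σ n).2 - 1]? = some b ∧
        sim (u[n]'(by omega)) b) := by
    intro n hn hne
    have hnu : n < u.length := by omega
    have hlast := topEF_last hne
    have hmem : topEF σ n ∈ slnn σ n := by
      rw [List.getLast?_eq_getElem?] at hlast
      exact List.mem_of_getElem? hlast
    have hsl := hslice n (slnn σ n) (u[n]'hnu) (slnn_get hn)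
      (List.getElem?_eq_getElem hnu)
    exact hsl _ hmem
  have hthr : ∀ n, n < σ.length → slnn σ n ≠ [] →
      (topEF σ n).2 - 1 ≤ n ∧ n + 1 - (topEF σ n).2 + (topEF σ n).1.length ≤ σ.length ∧
      ∀ k < (topEF σ n).1.length, ∃ i' e',
        (slnn σ (n + 1 - (topEF σ n).2 + k))[i']? = some e' ∧
        e'.1 = (topEF σ n).1 ∧ e'.2 = k + 1 ∧
        vfun σ (n + 1 - (topEF σ n).2 + k) i' = rankF σ n := by
    intro n hn hne
    obtain ⟨_, hq1, hq2, _⟩ := hkey n hn hne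
    exact thread hcut hstart hend (topEF_last hne) hq1 hq2
  have hRW : IsRewriteSeq sim G u ((SF σ).map (rwOfF σ)) := by
    intro gp hgp
    obtain ⟨n, hnS, rfl⟩ := List.mem_map.mp hgp
    obtain ⟨hn, hne⟩ := PF_mem.mp (SF_mem.mp hnS)
    obtain ⟨hG1, hq1, hq2, b, hb, hsimb⟩ := hkey n hn hne
    obtain ⟨hc1, hc2, hc3⟩ := hthr n hn hne
    have hrw1 : (rwOfF σ n).1 = (topEF σ n).1 := rfl
    have hrw2 : (rwOfF σ n).2 = n + 1 - (topEF σ n).2 := rfl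
    refine ⟨hG1, by rw [hrw1, hrw2]; omega, ?_⟩
    rw [List.forall₂_iff_get]
    constructor
    · simp only [List.length_take, List.length_drop, hrw1, hrw2]
      omega
    · intro k h1 h2
      simp only [List.get_eq_getElem, List.getElem_take, List.getElem_drop]
      have hk : k < (topEF σ n).1.length := by
        rw [hrw1] at h2; exact h2
      obtain ⟨i', e', he', hg', hq', hv'⟩ := hc3 k hk
      have hpk : n + 1 - (topEF σ n).2 + k < σ.length := by omega
      have hpku : n + 1 - (topEF σ n).2 + k < u.length := by omega
      have hsl' := hslice _ (slnn σ (n + 1 - (topEF σ n).2 + k))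
        (u[n + 1 - (topEF σ n).2 + k]'hpku) (slnn_get hpk)
        (List.getElem?_eq_getElem hpku)
      obtain ⟨_, _, _, b', hb', hsimb'⟩ := hsl' e' (List.mem_of_getElem? he')
      have hbe : (topEF σ n).1[k]? = some b' := by
        rw [← hg']
        rw [hq'] at hb'
        simpa using hb'
      obtain ⟨hklen, hbval⟩ := List.getElem?_eq_some_iff.mp hbe
      show sim (u[(rwOfF σ n).2 + k]'(by rw [hrw2]; exact hpku)) ((topEF σ n).1[k]'hklen)
      rw [hbval]
      have hidx : (rwOfF σ n).2 + k = n + 1 - (topEF σ n).2 + k := by rw [hrw2]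
      simp only [hidx]
      exact hsimb'
  refine ⟨(SF σ).map (rwOfF σ), hRW, ?_⟩
  have hbounds : ∀ t ∈ (SF σ).map (rwOfF σ), t.2 + t.1.length ≤ u.length :=
    fun t ht => (hRW t ht).2.1
  have hL1 : (rwYield u ((SF σ).map (rwOfF σ))).length = u.length :=
    rwYield_length _ u hbounds
  have hL2 : (seqYield u σ).length = u.length := by
    simp [seqYield, hlen]
  apply List.ext_getElem (by rw [hL1, hL2])
  intro x hx1 hx2
  have hxu : x < u.length := by rwa [hL1] at hx1
  have hxσ : x < σ.length := by omega
  have hslx : σ[x]'hxσ = slnn σ x := by simp [slnn, List.getElem?_eq_getElem hxσ]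
  have hRHS : (seqYield u σ)[x]'hx2 = sliceYield (u[x]'hxu) (slnn σ x) := by
    simp [seqYield, List.getElem_zip, hslx]
  rw [hRHS]
  by_cases hne : slnn σ x = []
  · rw [hne]
    have hy : sliceYield (u[x]'hxu) ([] : List (List α × ℕ)) = u[x]'hxu := rfl
    rw [hy]
    have hnw : ∀ t ∈ (SF σ).map (rwOfF σ), ¬(t.2 ≤ x ∧ x < t.2 + t.1.length) := by
      intro t ht hw
      obtain ⟨m, hmS, rfl⟩ := List.mem_map.mp ht
      obtain ⟨hm, hnem⟩ := PF_mem.mp (SF_mem.mp hmS)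
      obtain ⟨hc1, hc2, hc3⟩ := hthr m hm hnem
      have hrw1 : (rwOfF σ m).1 = (topEF σ m).1 := rfl
      have hrw2 : (rwOfF σ m).2 = m + 1 - (topEF σ m).2 := rfl
      rw [hrw1, hrw2] at hw
      have hk : x - (m + 1 - (topEF σ m).2) < (topEF σ m).1.length := by omega
      obtain ⟨i', e', he', _, _, _⟩ := hc3 _ hk
      have hpos : m + 1 - (topEF σ m).2 + (x - (m + 1 - (topEF σ m).2)) = x := by omega
      rw [hpos] at he'
      rw [hne] at he'
      simp at he'
    exact rwYield_no_writer _ u x hxu hbounds hnw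
  · have hlast := topEF_last hne
    obtain ⟨hG1, hq1, hq2, b, hb, hsimb⟩ := hkey x hxσ hne
    obtain ⟨hc1x, hc2x, hc3x⟩ := hthr x hxσ hne
    have hyield : sliceYield (u[x]'hxu) (slnn σ x) = b := by
      simp [sliceYield, hlast, hb]
    rw [hyield]
    have hrwx1 : (rwOfF σ x).1 = (topEF σ x).1 := rfl
    have hrwx2 : (rwOfF σ x).2 = x + 1 - (topEF σ x).2 := rfl
    have hQx : (rwOfF σ x).2 ≤ x ∧ x < (rwOfF σ x).2 + (rwOfF σ x).1.length := by
      rw [hrwx1, hrwx2]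
      omega
    have hxS : x ∈ SF σ := SF_mem.mpr (PF_mem.mpr ⟨hxσ, hne⟩)
    obtain ⟨s₁, m, s₂, hdec, hQm, hno⟩ := exists_last_sat
      (fun m => (rwOfF σ m).2 ≤ x ∧ x < (rwOfF σ m).2 + (rwOfF σ m).1.length)
      (SF σ) ⟨x, hxS, hQx⟩
    have hmS : m ∈ SF σ := by rw [hdec]; simp
    obtain ⟨hm, hnem⟩ := PF_mem.mp (SF_mem.mp hmS)
    have hmx : rwOfF σ m = rwOfF σ x := by
      obtain ⟨hc1m, hc2m, hc3m⟩ := hthr m hm hnem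
      have hrw1 : (rwOfF σ m).1 = (topEF σ m).1 := rfl
      have hrw2 : (rwOfF σ m).2 = m + 1 - (topEF σ m).2 := rfl
      rw [hrw1, hrw2] at hQm
      have hk : x - (m + 1 - (topEF σ m).2) < (topEF σ m).1.length := by omega
      obtain ⟨i', e', he', hg', hq', hv'⟩ := hc3m _ hk
      have hpos : m + 1 - (topEF σ m).2 + (x - (m + 1 - (topEF σ m).2)) = x := by omega
      rw [hpos] at he' hv'
      have hi' : i' < (slnn σ x).length := (List.getElem?_eq_some_iff.mp he').1
      have hlpos : 0 < (slnn σ x).length := List.length_pos_iff.mpr hne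
      by_cases htop : i' = (slnn σ x).length - 1
      · have hex : (slnn σ x)[i']? = some (topEF σ x) := by
          rw [htop, ← List.getLast?_eq_getElem?]
          exact hlast
        rw [he'] at hex
        injection hex with hex
        subst hex
        refine Prod.ext ?_ ?_
        · rw [hrw1, hrwx1, ← hg']
        · rw [hrw2, hrwx2]
          omega
      · have hlt : i' < (slnn σ x).length - 1 := by omega
        have hvlt : vfun σ x i' < vfun σ x ((slnn σ x).length - 1) :=
          vfun_mono hcut x i' _ hlt (by omega)
        rw [hv'] at hvlt
        have hrm : rankF σ m < rankF σ x := hvlt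
        have hxloc : x ∈ s₁ ∨ x = m ∨ x ∈ s₂ := by
          have hx' := hxS
          rw [hdec] at hx'
          simpa using hx'
        rcases hxloc with h | h | h
        · exfalso
          have hsorted := SF_sorted σ
          rw [hdec] at hsorted
          have hle := (List.pairwise_append.mp hsorted).2.2 x h m (by simp)
          exact absurd hle (not_le.mpr hrm)
        · exfalso; rw [h] at hrm; exact lt_irrefl _ hrm
        · exact absurd hQx (hno x h)
    have hρdec : (SF σ).map (rwOfF σ) =
        (s₁.map (rwOfF σ)) ++ rwOfF σ m :: (s₂.map (rwOfF σ)) := by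
      rw [hdec]; simp
    have hno' : ∀ t' ∈ s₂.map (rwOfF σ), ¬(t'.2 ≤ x ∧ x < t'.2 + t'.1.length) := by
      intro t' ht'
      obtain ⟨m', hm', rfl⟩ := List.mem_map.mp ht'
      exact hno m' hm'
    have hbounds' : ∀ t ∈ (s₁.map (rwOfF σ)) ++ rwOfF σ m :: (s₂.map (rwOfF σ)),
        t.2 + t.1.length ≤ u.length := by
      rw [← hρdec]; exact hbounds
    have hfin := rwYield_last_writer (s₁.map (rwOfF σ)) (s₂.map (rwOfF σ)) (rwOfF σ m)
      u x hxu hbounds' hQm hno'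
    have hlenB : (rwYield u ((s₁.map (rwOfF σ)) ++ rwOfF σ m :: (s₂.map (rwOfF σ)))).length
        = u.length := rwYield_length _ u hbounds'
    have hval : (rwOfF σ m).1[x - (rwOfF σ m).2]? = some b := by
      rw [hmx]
      have hidx : x - (rwOfF σ x).2 = (topEF σ x).2 - 1 := by
        rw [hrwx2]; omega
      rw [hrwx1, hidx]
      exact hb
    have hgoal2 : (rwYield u ((SF σ).map (rwOfF σ)))[x]? = some b := by
      rw [hρdec, List.getElem?_eq_getElem (by rw [hlenB]; exact hxu), hfin]
      obtain ⟨hlt2, hval2⟩ := List.getElem?_eq_some_iff.mp hval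
      rw [hval2]
    exact (List.getElem?_eq_some_iff.mp hgoal2).2
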